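/- Let ℤ[1/4] denote the additive subgroup of ℚ consisting of all rationals of the form a / 4^n with a ∈ ℤ and n ∈ ℕ. Consider System A, the ℕ-indexed directed system of abelian groups with A_n = ℤ ⊕ ℤ and every transition map (x, y) ↦ (2x + 2y, 2x + 2y). The levelwise maps T_n : A_n → A_n, (x, y) ↦ (x + y, x + y), commute with the transition maps of System A, and hence induce a group endomorphism T of the direct limit colim A_n. Under the isomorphism φ : colim A_n ≅ ℤ[1/4] (class of (x, y) ∈ A_n ↦ (x + y) / (2 · 4^n)), the induced map T corresponds to multiplication by 2 on ℤ[1/4]; that is, φ ∘ T = 2 · φ. -/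
import Mathlib

/-- The step map of System A: `(x, y) ↦ (2x + 2y, 2x + 2y)`. -/
def stepA : (ℤ × ℤ) →+ (ℤ × ℤ) where
  toFun p := (2 * p.1 + 2 * p.2, 2 * p.1 + 2 * p.2)
  map_zero' := by simp
  map_add' p q := by
    simp only [Prod.fst_add, Prod.snd_add, Prod.mk_add_mk, Prod.mk.injEq]
    constructor <;> ring

/-- `stepA` viewed as an additive monoid endomorphism, so that it can be iterated. -/
def stepAEnd : AddMonoid.End (ℤ × ℤ) := stepA

/-- System A: the transition map from level `i` to level `j` is the `(j-i)`-fold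
iterate of `stepA`. -/
def sysA : ∀ i j : ℕ, i ≤ j → (ℤ × ℤ) →+ (ℤ × ℤ) :=
  fun i j _ => stepAEnd ^ (j - i)

/-- The levelwise map `T_n : A_n → A_n`, `(x, y) ↦ (x + y, x + y)`. -/
def TmapAA : (ℤ × ℤ) →+ (ℤ × ℤ) where
  toFun p := (p.1 + p.2, p.1 + p.2)
  map_zero' := by simp
  map_add' p q := by
    simp only [Prod.fst_add, Prod.snd_add, Prod.mk_add_mk, Prod.mk.injEq]
    constructor <;> ring

lemma step_comm (x : ℤ × ℤ) : stepA (TmapAA x) = TmapAA (stepA x) := by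
  simp [stepA, TmapAA]; ring

lemma pow_comm (k : ℕ) (x : ℤ × ℤ) :
    (stepAEnd ^ k) (TmapAA x) = TmapAA ((stepAEnd ^ k) x) := by
  induction k generalizing x with
  | zero => simp
  | succ n ih =>
    rw [pow_succ]
    show (stepAEnd ^ n) (stepAEnd (TmapAA x)) = TmapAA ((stepAEnd ^ n) (stepAEnd x))
    rw [show stepAEnd (TmapAA x) = TmapAA (stepAEnd x) from step_comm x, ih (stepAEnd x)]

/-- The levelwise maps `(x, y) ↦ (x + y, x + y)` commute with the transition maps of
System A, hence induce a group endomorphism `T` of the direct limit; under the isomorphism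
`φ : colim A_n ≅ ℤ[1/4]`, the induced map `T` corresponds to multiplication by `2` on
`ℤ[1/4]`, i.e. `φ ∘ T = 2 · φ`. -/
theorem inducedMap_TmapAA_corresponds_to_two :
    (∀ x : ℤ × ℤ, stepA (TmapAA x) = TmapAA (stepA x)) ∧
    ∃ T : AddCommGroup.DirectLimit (fun _ : ℕ => ℤ × ℤ) sysA →+ AddCommGroup.DirectLimit (fun _ : ℕ => ℤ × ℤ) sysA,
      (∀ (n : ℕ) (x : ℤ × ℤ), T (AddCommGroup.DirectLimit.of (fun _ : ℕ => ℤ × ℤ) sysA n x) = AddCommGroup.DirectLimit.of (fun _ : ℕ => ℤ × ℤ) sysA n (TmapAA x)) ∧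
      ∀ (φ : AddCommGroup.DirectLimit (fun _ : ℕ => ℤ × ℤ) sysA →+ ℚ),
        (∀ (n : ℕ) (x : ℤ × ℤ), φ (AddCommGroup.DirectLimit.of (fun _ : ℕ => ℤ × ℤ) sysA n x) = ((x.1 : ℚ) + (x.2 : ℚ)) / (2 * 4 ^ n)) →
        ∀ a, φ (T a) = 2 * φ a := by
  refine ⟨step_comm, ?_⟩
  have Hg : ∀ (i j : ℕ) (hij : i ≤ j) (x : ℤ × ℤ),
      (AddCommGroup.DirectLimit.of (fun _ : ℕ => ℤ × ℤ) sysA j).comp TmapAA (sysA i j hij x)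
        = (AddCommGroup.DirectLimit.of (fun _ : ℕ => ℤ × ℤ) sysA i).comp TmapAA x := by
    intro i j hij x
    simp only [AddMonoidHom.comp_apply]
    show AddCommGroup.DirectLimit.of (fun _ : ℕ => ℤ × ℤ) sysA j (TmapAA ((stepAEnd ^ (j-i)) x)) = _
    rw [← pow_comm (j - i) x]
    exact AddCommGroup.DirectLimit.of_f (f := sysA) (hij := hij) (x := TmapAA x)
  refine ⟨AddCommGroup.DirectLimit.lift _ _ _
    (fun i => (AddCommGroup.DirectLimit.of (fun _ : ℕ => ℤ × ℤ) sysA i).comp TmapAA) Hg, ?_, ?_⟩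
  · intro n x
    apply AddCommGroup.DirectLimit.lift_of
  · intro φ hφ a
    induction a using AddCommGroup.DirectLimit.induction_on with
    | ih i x =>
      rw [AddCommGroup.DirectLimit.lift_of, AddMonoidHom.comp_apply, hφ, hφ]
      simp only [TmapAA, AddMonoidHom.coe_mk, ZeroHom.coe_mk]
      push_cast
      ring
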